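/- For every number of arms k ≥ 3, every deterministic algorithm A for the IMAB problem with k arms, and every time horizon T ≥ k that is a multiple of k, there exists an IMAB instance I = (f_1, …, f_k) (each f_i a reward function) on which the policy regret of A is linear in T: OPT(I,T) − ALG_A(I,T) ≥ T/6. -/

import Mathlib

open scoped Classical

/-- A reward function: bounded in [0,1], nondecreasing, with decreasing marginal returns. -/
def IsRewardFn (f : ℕ → ℝ) : Prop :=
  (∀ n, 0 ≤ f n) ∧ (∀ n, f n ≤ 1) ∧ Monotone f ∧
    ∀ n, 1 ≤ n → f (n + 1) - f n ≤ f n - f (n - 1)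

/-- Cumulative reward from pulling an arm with reward function `f` for `N` pulls. -/
noncomputable def Rew (f : ℕ → ℝ) (N : ℕ) : ℝ := ∑ n ∈ Finset.Icc 1 N, f n

/-- Offline optimum: the best total reward over all allocations of `T` pulls to the `k` arms. -/
noncomputable def OPT {k : ℕ} (f : Fin k → ℕ → ℝ) (T : ℕ) : ℝ :=
  sSup {x : ℝ | ∃ M : Fin k → ℕ, (∑ i, M i) = T ∧ x = ∑ i, Rew (f i) (M i)}

/-- The history of a deterministic algorithm `A` (mapping past observations to the next arm)
run on the instance `f` for `t` steps: the list of (arm pulled, reward received). -/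
noncomputable def algHist {k : ℕ} (A : List (Fin k × ℝ) → Fin k) (f : Fin k → ℕ → ℝ) :
    ℕ → List (Fin k × ℝ)
  | 0 => []
  | t + 1 =>
    let h := algHist A f t
    let i := A h
    h ++ [(i, f i ((h.countP fun p => decide (p.1 = i)) + 1))]

/-- The number of pulls of arm `i` in the history `h`. -/
def armPulls {k : ℕ} (h : List (Fin k × ℝ)) (i : Fin k) : ℕ :=
  h.countP fun p => decide (p.1 = i)

namespace IMABaux


def Rcap (d N : ℕ) : ℕ := ∑ n ∈ Finset.Icc 1 N, min n d

lemma Rcap_zero (d : ℕ) : Rcap d 0 = 0 := by simp [Rcap]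

lemma Rcap_succ (d N : ℕ) : Rcap d (N + 1) = Rcap d N + min (N + 1) d := by
  unfold Rcap
  rw [Finset.sum_Icc_succ_top (by omega)]

lemma Rcap_of_le {d N : ℕ} (h : N ≤ d) : 2 * Rcap d N = N * (N + 1) := by
  induction N with
  | zero => simp [Rcap_zero]
  | succ n ih =>
    have hm : min (n + 1) d = n + 1 := by omega
    rw [Rcap_succ, hm, Nat.mul_add, ih (by omega)]
    ring

lemma Rcap_formula {c T : ℕ} (h : c ≤ T) : 2 * Rcap c T + c * c = c * (2 * T + 1) := by
  induction T with
  | zero =>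
    interval_cases c
    simp [Rcap_zero]
  | succ n ih =>
    rcases Nat.lt_or_ge n c with h1 | h1
    · have hc : c = n + 1 := by omega
      subst hc
      rw [Rcap_of_le (le_refl (n + 1))]
      ring
    · have hm : min (n + 1) c = c := by omega
      rw [Rcap_succ, hm]
      calc 2 * (Rcap c n + c) + c * c = (2 * Rcap c n + c * c) + 2 * c := by ring
        _ = c * (2 * n + 1) + 2 * c := by rw [ih h1]
        _ = c * (2 * (n + 1) + 1) := by ring

lemma Rcap_superadd (d a b : ℕ) : Rcap d a + Rcap d b ≤ Rcap d (a + b) := by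
  induction b with
  | zero => simp [Rcap_zero]
  | succ n ih =>
    have h1 : Rcap d (a + (n + 1)) = Rcap d (a + n) + min (a + n + 1) d := by
      rw [← Nat.add_assoc, Rcap_succ]
    have h2 : min (n + 1) d ≤ min (a + n + 1) d := by omega
    rw [Rcap_succ, h1]
    omega

lemma Rcap_sum_le {k : ℕ} (d : ℕ) (N : Fin k → ℕ) (s : Finset (Fin k)) :
    ∑ i ∈ s, Rcap d (N i) ≤ Rcap d (∑ i ∈ s, N i) := by
  classical
  induction s using Finset.induction with
  | empty => simp [Rcap_zero]
  | @insert _ _ hx ih =>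
    rw [Finset.sum_insert hx, Finset.sum_insert hx]
    calc Rcap d (N _) + _ ≤ Rcap d (N _) + Rcap d _ := by gcongr
      _ ≤ _ := Rcap_superadd _ _ _



lemma algHist_succ {k : ℕ} (A : List (Fin k × ℝ) → Fin k) (f : Fin k → ℕ → ℝ) (t : ℕ) :
    algHist A f (t + 1) = algHist A f t ++
      [(A (algHist A f t),
        f (A (algHist A f t)) (armPulls (algHist A f t) (A (algHist A f t)) + 1))] := rfl

lemma armPulls_append {k : ℕ} (h h' : List (Fin k × ℝ)) (i : Fin k) :
    armPulls (h ++ h') i = armPulls h i + armPulls h' i := List.countP_append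

lemma armPulls_singleton {k : ℕ} (i i' : Fin k) (x : ℝ) :
    armPulls [(i, x)] i' = if i = i' then 1 else 0 := by
  by_cases h : i = i' <;> simp [armPulls, List.countP_cons, h]

lemma sum_armPulls {k : ℕ} (h : List (Fin k × ℝ)) : ∑ i, armPulls h i = h.length := by
  induction h with
  | nil => simp [armPulls]
  | cons p t ih =>
    have h1 : ∀ i, armPulls (p :: t) i = armPulls t i + (if p.1 = i then 1 else 0) := by
      intro i
      simp [armPulls, List.countP_cons]
    rw [Finset.sum_congr rfl (fun i _ => h1 i), Finset.sum_add_distrib, ih]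
    simp [List.length_cons]

lemma length_algHist {k : ℕ} (A : List (Fin k × ℝ) → Fin k) (f : Fin k → ℕ → ℝ) :
    ∀ t, (algHist A f t).length = t := by
  intro t
  induction t with
  | zero => rfl
  | succ n ih => rw [algHist_succ, List.length_append, ih]; rfl

lemma armPulls_algHist_mono {k : ℕ} (A : List (Fin k × ℝ) → Fin k) (f : Fin k → ℕ → ℝ)
    (i : Fin k) : Monotone (fun t => armPulls (algHist A f t) i) := by
  apply monotone_nat_of_le_succ
  intro t
  rw [algHist_succ, armPulls_append]
  omega

lemma algHist_congr {k : ℕ} (A : List (Fin k × ℝ) → Fin k) (f g : Fin k → ℕ → ℝ) (T : ℕ)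
    (hfg : ∀ i n, 1 ≤ n → n ≤ armPulls (algHist A g T) i → f i n = g i n) :
    ∀ t, t ≤ T → algHist A f t = algHist A g t := by
  intro t
  induction t with
  | zero => intro _; rfl
  | succ n ih =>
    intro hn
    have hih : algHist A f n = algHist A g n := ih (by omega)
    rw [algHist_succ, algHist_succ, hih]
    set i := A (algHist A g n) with hi
    set cnt := armPulls (algHist A g n) i with hcnt
    have hle : cnt + 1 ≤ armPulls (algHist A g T) i := by
      have h1 : armPulls (algHist A g (n + 1)) i = cnt + 1 := by
        rw [algHist_succ, armPulls_append, armPulls_singleton, if_pos rfl]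
      have h2 := armPulls_algHist_mono A g i hn
      simpa [h1] using h2
    rw [hfg i (cnt + 1) (by omega) hle]




lemma isRewardFn_cap (γ : ℝ) (hγ : 0 ≤ γ) (d : ℕ) (hd : γ * d ≤ 1) :
    IsRewardFn (fun n => γ * ((min n d : ℕ) : ℝ)) := by
  refine ⟨fun n => by positivity, fun n => ?_, fun a b hab => ?_, fun n hn => ?_⟩
  · simp only
    have h1 : γ * ((min n d : ℕ) : ℝ) ≤ γ * (d : ℝ) := by
      apply mul_le_mul_of_nonneg_left _ hγ
      exact_mod_cast Nat.min_le_right n d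
    linarith
  · simp only
    apply mul_le_mul_of_nonneg_left _ hγ
    exact_mod_cast (show min a d ≤ min b d by omega)
  · simp only
    have h1 : min (n + 1) d + min (n - 1) d ≤ 2 * min n d := by omega
    have h2 : ((min (n + 1) d : ℕ) : ℝ) + ((min (n - 1) d : ℕ) : ℝ)
        ≤ 2 * ((min n d : ℕ) : ℝ) := by exact_mod_cast h1
    nlinarith

lemma Rew_cap (γ : ℝ) (d M : ℕ) :
    Rew (fun n => γ * ((min n d : ℕ) : ℝ)) M = γ * ((Rcap d M : ℕ) : ℝ) := by
  unfold Rew Rcap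
  rw [Nat.cast_sum, Finset.mul_sum]

lemma Rew_le_card (f : ℕ → ℝ) (hf : ∀ n, f n ≤ 1) (M : ℕ) : Rew f M ≤ (M : ℝ) := by
  unfold Rew
  calc ∑ n ∈ Finset.Icc 1 M, f n ≤ ∑ _n ∈ Finset.Icc 1 M, (1 : ℝ) :=
        Finset.sum_le_sum fun i _ => hf i
    _ = (M : ℝ) := by simp [Nat.card_Icc]

lemma Rew_zero (f : ℕ → ℝ) : Rew f 0 = 0 := by simp [Rew]

lemma exists_min_pulls {k : ℕ} (hk : 0 < k) (N : Fin k → ℕ) :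
    ∃ j, k * N j ≤ ∑ i, N i := by
  obtain ⟨j, -, hj⟩ := Finset.exists_min_image Finset.univ N ⟨⟨0, hk⟩, Finset.mem_univ _⟩
  refine ⟨j, ?_⟩
  calc k * N j = ∑ _i : Fin k, N j := by simp [Finset.sum_const, Finset.card_univ, mul_comm]
    _ ≤ ∑ i, N i := Finset.sum_le_sum fun i _ => hj i (Finset.mem_univ i)

lemma core {k : ℕ} (T : ℕ) (hk : 0 < k) (A : List (Fin k × ℝ) → Fin k)
    (γ : ℝ) (hγ : 0 ≤ γ) (c C : ℕ) (hcC : c ≤ C) (hγC : γ * C ≤ 1)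
    (hcap : ∀ n, k * n ≤ T → n ≤ c) :
    ∃ f : Fin k → ℕ → ℝ, (∀ i, IsRewardFn (f i)) ∧
      γ * ((Rcap C T : ℕ) : ℝ) - γ * ((Rcap c T : ℕ) : ℝ) ≤
        OPT f T - ∑ i, Rew (f i) (armPulls (algHist A f T) i) := by
  classical
  set g : Fin k → ℕ → ℝ := fun _ n => γ * ((min n c : ℕ) : ℝ) with hg
  have hsum : ∑ i, armPulls (algHist A g T) i = T := by
    rw [sum_armPulls, length_algHist]
  obtain ⟨j, hj⟩ := exists_min_pulls hk (fun i => armPulls (algHist A g T) i)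
  rw [hsum] at hj
  have hjc : armPulls (algHist A g T) j ≤ c := hcap _ hj
  set f : Fin k → ℕ → ℝ :=
    fun i => if i = j then (fun n => γ * ((min n C : ℕ) : ℝ)) else g i with hf
  have hγc : γ * c ≤ 1 := by
    refine le_trans ?_ hγC
    apply mul_le_mul_of_nonneg_left _ hγ
    exact_mod_cast hcC
  have hRF : ∀ i, IsRewardFn (f i) := by
    intro i
    by_cases h : i = j
    · rw [hf]; simp only [h, eq_self_iff_true, if_true]; exact isRewardFn_cap γ hγ C hγC
    · rw [hf]; simp only [if_neg h, hg]; exact isRewardFn_cap γ hγ c hγc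
  have hist : algHist A f T = algHist A g T := by
    apply algHist_congr A f g T ?_ T le_rfl
    intro i n h1 h2
    by_cases h : i = j
    · subst h
      have hnc : n ≤ c := le_trans h2 hjc
      have hmm : min n C = min n c := by omega
      rw [hf]
      simp only [eq_self_iff_true, if_true, hmm, hg]
    · rw [hf]
      simp only [if_neg h]
  have hALG : ∑ i, Rew (f i) (armPulls (algHist A f T) i) ≤ γ * ((Rcap c T : ℕ) : ℝ) := by
    rw [hist]
    have step1 : ∀ i ∈ Finset.univ, Rew (f i) (armPulls (algHist A g T) i)
        = γ * ((Rcap c (armPulls (algHist A g T) i) : ℕ) : ℝ) := by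
      intro i _
      by_cases h : i = j
      · subst h
        rw [hf]
        simp only [eq_self_iff_true, if_true]
        rw [Rew_cap]
        have e1 := Rcap_of_le (le_trans hjc hcC)
        have e2 := Rcap_of_le hjc
        have e3 : Rcap C (armPulls (algHist A g T) i)
            = Rcap c (armPulls (algHist A g T) i) := by omega
        rw [e3]
      · rw [hf]
        simp only [if_neg h, hg]
        exact Rew_cap γ c _
    rw [Finset.sum_congr rfl step1]
    have hcast : ∑ i, γ * ((Rcap c (armPulls (algHist A g T) i) : ℕ) : ℝ)
        = γ * ((∑ i, Rcap c (armPulls (algHist A g T) i) : ℕ) : ℝ) := by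
      rw [Nat.cast_sum, Finset.mul_sum]
    rw [hcast]
    apply mul_le_mul_of_nonneg_left _ hγ
    have h2 := Rcap_sum_le c (fun i => armPulls (algHist A g T) i) Finset.univ
    rw [hsum] at h2
    exact_mod_cast h2
  have hOPT : γ * ((Rcap C T : ℕ) : ℝ) ≤ OPT f T := by
    have hmem : γ * ((Rcap C T : ℕ) : ℝ) ∈
        {x : ℝ | ∃ M : Fin k → ℕ, (∑ i, M i) = T ∧ x = ∑ i, Rew (f i) (M i)} := by
      refine ⟨fun i => if i = j then T else 0, by simp, ?_⟩
      rw [Finset.sum_eq_single j]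
      · simp only [eq_self_iff_true, if_true]
        rw [hf]
        simp only [eq_self_iff_true, if_true]
        rw [Rew_cap]
      · intro b _ hb
        simp only [if_neg hb, Rew_zero]
      · intro h; exact absurd (Finset.mem_univ j) h
    apply le_csSup _ hmem
    refine ⟨(T : ℝ), ?_⟩
    rintro x ⟨M, hM, rfl⟩
    calc ∑ i, Rew (f i) (M i) ≤ ∑ i, (M i : ℝ) :=
          Finset.sum_le_sum fun i _ => Rew_le_card _ (hRF i).2.1 _
      _ = (T : ℝ) := by rw [← Nat.cast_sum, hM]
  exact ⟨f, hRF, by rw [OPT]; rw [OPT] at hOPT; linarith⟩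


lemma nat_ineq {T : ℕ} (hT4 : 4 ≤ T) :
    3 * (T / 3 + 1) * (2 * T + 1) ≤ 2 * T ^ 2 + 3 * T + 3 * ((T / 3 + 1) * (T / 3 + 1)) := by
  obtain ⟨q, s, hq, hs⟩ : ∃ q s, T = 3 * q + s ∧ s < 3 := ⟨T / 3, T % 3, by omega, by omega⟩
  subst hq
  have hdiv : (3 * q + s) / 3 = q := by omega
  rw [hdiv]
  rcases (by omega : s = 0 ∨ s = 1 ∨ s = 2) with h | h | h <;> subst h
  · have hq2 : 2 ≤ q := by omega
    nlinarith
  · have hq1 : 1 ≤ q := by omega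
    nlinarith
  · nlinarith

end IMABaux

/-- Any deterministic algorithm for the IMAB problem with `k ≥ 3` arms suffers policy regret
at least `T / 6` on some instance, for every horizon `T ≥ k` that is a multiple of `k`. -/
theorem regret_lower_bound (k T : ℕ) (hk : 3 ≤ k) (hT : k ≤ T) (hdvd : k ∣ T)
    (A : List (Fin k × ℝ) → Fin k) :
    ∃ f : Fin k → ℕ → ℝ, (∀ i, IsRewardFn (f i)) ∧
      (T : ℝ) / 6 ≤ OPT f T - ∑ i, Rew (f i) (armPulls (algHist A f T) i) := by
  have hk0 : 0 < k := by omega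
  by_cases h3 : T = 3
  · subst h3
    obtain ⟨f, hRF, hle⟩ := IMABaux.core (k := k) 3 hk0 A (1 / 2 : ℝ) (by norm_num) 1 2
      (by norm_num) (by norm_num)
      (fun n hn => by
        have h1 : 3 * n ≤ k * n := Nat.mul_le_mul_right n hk
        omega)
    refine ⟨f, hRF, le_trans ?_ hle⟩
    have h5 : IMABaux.Rcap 2 3 = 5 := by decide
    have h3' : IMABaux.Rcap 1 3 = 3 := by decide
    rw [h5, h3']
    norm_num
  · have hT4 : 4 ≤ T := by omega
    have hTR : (0 : ℝ) < T := by positivity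
    obtain ⟨f, hRF, hle⟩ := IMABaux.core (k := k) T hk0 A (1 / (T : ℝ)) (by positivity)
      (T / 3 + 1) T (by omega)
      (by
        rw [one_div, inv_mul_cancel₀ (ne_of_gt hTR)])
      (fun n hn => by
        have h1 : 3 * n ≤ k * n := Nat.mul_le_mul_right n hk
        omega)
    refine ⟨f, hRF, le_trans ?_ hle⟩
    set c := T / 3 + 1 with hcd
    have hcT : c ≤ T := by omega
    have e1 : 2 * IMABaux.Rcap T T = T * (T + 1) := IMABaux.Rcap_of_le le_rfl
    have e2 : 2 * IMABaux.Rcap c T + c * c = c * (2 * T + 1) := IMABaux.Rcap_formula hcT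
    have e3 : 3 * c * (2 * T + 1) ≤ 2 * T ^ 2 + 3 * T + 3 * (c * c) := by
      have := IMABaux.nat_ineq hT4
      calc 3 * c * (2 * T + 1) = 3 * (T / 3 + 1) * (2 * T + 1) := by rw [hcd]
        _ ≤ _ := this
        _ = 2 * T ^ 2 + 3 * T + 3 * (c * c) := by rw [hcd]
    have E1 : (2 : ℝ) * (IMABaux.Rcap T T : ℝ) = (T : ℝ) * ((T : ℝ) + 1) := by exact_mod_cast e1
    have E2 : (2 : ℝ) * (IMABaux.Rcap c T : ℝ) + (c : ℝ) * c = (c : ℝ) * (2 * T + 1) := by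
      exact_mod_cast e2
    have E3 : (3 : ℝ) * c * (2 * T + 1) ≤ 2 * (T : ℝ) ^ 2 + 3 * T + 3 * ((c : ℝ) * c) := by
      exact_mod_cast e3
    have key : (T : ℝ) * T ≤ 6 * (IMABaux.Rcap T T : ℝ) - 6 * (IMABaux.Rcap c T : ℝ) := by
      nlinarith
    have hrw : 1 / (T : ℝ) * (IMABaux.Rcap T T : ℝ) - 1 / (T : ℝ) * (IMABaux.Rcap c T : ℝ)
        = ((IMABaux.Rcap T T : ℝ) - (IMABaux.Rcap c T : ℝ)) / T := by ring
    rw [hrw, div_le_div_iff₀ (by norm_num) hTR]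
    linarith
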